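/- Let k ≥ 1 and let τ ∈ S_n avoid the increasing pattern 12⋯k. Suppose the r-upfix of τ is increasing, i.e., the letters n−r+1,…,n appear in τ in increasing order of both position and value. Then every permutation obtained from τ by rearranging which of the values n−r+1,…,n occupy which of their r positions (leaving all other letters fixed) also avoids 12⋯k. -/

import Mathlib

/-- `w` is a permutation of `{1,…,n}`, viewed as a word containing each of `1,…,n` exactly once. -/
def IsPermWord (n : ℕ) (w : List ℕ) : Prop := w.Perm (List.range' 1 n)

/-- The standardization of a word `w` of distinct letters: each letter is replaced by its rank. -/
def stdize (w : List ℕ) : List ℕ := w.map fun x => (w.filter fun y => decide (y ≤ x)).length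

/-- `τ` avoids the set of patterns `P`: no nonempty subsequence of `τ` standardizes to a pattern. -/
def AvoidsSet (P : Set (List ℕ)) (τ : List ℕ) : Prop :=
  ∀ u : List ℕ, u.Sublist τ → u ≠ [] → stdize u ∉ P
/-- The `r`-upfix of `τ ∈ S_n`: the subsequence formed by the letters `n - r + 1, …, n`. -/
def upfix (n r : ℕ) (τ : List ℕ) : List ℕ := τ.filter fun x => decide (n - r + 1 ≤ x)

lemma stdize_of_sorted : ∀ (u : List ℕ), u.Pairwise (· < ·) → stdize u = List.range' 1 u.length := by
  intro u
  induction u with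
  | nil => intro _; rfl
  | cons a t ih =>
    intro h
    rw [List.pairwise_cons] at h
    obtain ⟨ha, ht⟩ := h
    have h1 : ((a :: t).filter fun y => decide (y ≤ a)) = [a] := by
      have hnil : (t.filter fun y => decide (y ≤ a)) = [] := by
        rw [List.filter_eq_nil_iff]
        intro y hy
        simp only [decide_eq_true_eq]
        exact not_le.2 (ha y hy)
      simp [List.filter_cons, hnil]
    have h2 : ∀ x ∈ t, ((a :: t).filter fun y => decide (y ≤ x)).length
        = 1 + (t.filter fun y => decide (y ≤ x)).length := by
      intro x hx
      rw [List.filter_cons]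
      simp [le_of_lt (ha x hx), Nat.add_comm]
    show (((a :: t).filter fun y => decide (y ≤ a)).length)
        :: (t.map fun x => ((a :: t).filter fun y => decide (y ≤ x)).length)
        = List.range' 1 (t.length + 1)
    rw [List.map_congr_left h2, h1]
    have : (t.map fun x => 1 + (t.filter fun y => decide (y ≤ x)).length)
        = (stdize t).map (1 + ·) := by
      simp [stdize, List.map_map, Function.comp]
    rw [this, ih ht]
    rw [List.map_add_range']
    rw [List.range'_succ]
    simp

lemma sorted_of_stdize {u : List ℕ} {k : ℕ} (h : stdize u = List.range' 1 k) :
    u.Pairwise (· < ·) ∧ u.length = k := by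
  have hlen : u.length = k := by
    have := congrArg List.length h
    simpa [stdize] using this
  refine ⟨?_, hlen⟩
  rw [List.pairwise_iff_getElem]
  intro i j hi hj hij
  by_contra hcon
  push_neg at hcon
  have hmono : ((u.filter fun y => decide (y ≤ u[j])).length)
      ≤ (u.filter fun y => decide (y ≤ u[i])).length := by
    refine (List.monotone_filter_right u ?_).length_le
    intro a ha
    simp only [decide_eq_true_eq] at ha ⊢
    exact le_trans ha hcon
  have hi' : i < (stdize u).length := by simpa [stdize] using hi
  have hj' : j < (stdize u).length := by simpa [stdize] using hj
  have hgi : (stdize u)[i]'hi' = (u.filter fun y => decide (y ≤ u[i])).length := by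
    simp [stdize]
  have hgj : (stdize u)[j]'hj' = (u.filter fun y => decide (y ≤ u[j])).length := by
    simp [stdize]
  have hri : (stdize u)[i]'hi' = 1 + i := by
    simp [h, List.getElem_range']
  have hrj : (stdize u)[j]'hj' = 1 + j := by
    simp [h, List.getElem_range']
  omega

lemma keyB {m : ℕ} {x y : List ℕ}
    (h : List.Forall₂ (fun a c => (a ≤ m ∧ a = c) ∨ (m < a ∧ m < c)) x y) :
    ∀ s b : List ℕ, (s ++ b).Sublist x → (∀ z ∈ s, z ≤ m) → (∀ z ∈ b, m < z) →
      ∃ b', (s ++ b').Sublist y ∧ b'.length = b.length ∧ ∀ z ∈ b', m < z := by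
  induction h with
  | nil =>
    intro s b hsub hs hb
    have := List.sublist_nil.1 hsub
    have hs0 : s = [] := by
      cases s with
      | nil => rfl
      | cons w s₁ => simp at this
    have hb0 : b = [] := by
      cases b with
      | nil => rfl
      | cons w b₁ => subst hs0; simp at this
    subst hs0; subst hb0
    exact ⟨[], List.nil_sublist _, rfl, by simp⟩
  | @cons a c x' y' hR hF ih =>
    intro s b hsub hs hb
    rcases List.sublist_cons_iff.1 hsub with h1 | ⟨t, ht, htsub⟩
    · obtain ⟨b', hb1, hb2, hb3⟩ := ih s b h1 hs hb
      exact ⟨b', hb1.trans (List.sublist_cons_self c y'), hb2, hb3⟩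
    · cases s with
      | nil =>
        cases b with
        | nil => exact ⟨[], List.nil_sublist _, rfl, by simp⟩
        | cons z b₁ =>
          simp only [List.nil_append, List.cons.injEq] at ht
          obtain ⟨rfl, rfl⟩ := ht
          have hzbig : m < z := hb z (List.mem_cons_self (a := z) (l := b₁))
          have hcbig : m < c := by
            rcases hR with ⟨h1, _⟩ | ⟨_, h2⟩
            · omega
            · exact h2
          obtain ⟨b'', hb1, hb2, hb3⟩ := ih [] b₁ (by simpa using htsub)
            (by simp) (fun w hw => hb w (List.mem_cons_of_mem z hw))
          refine ⟨c :: b'', ?_, by simpa using hb2, ?_⟩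
          · have hb1' : b''.Sublist y' := by simpa using hb1
            show (c :: b'').Sublist (c :: y')
            exact List.cons_sublist_cons.2 hb1'
          · intro w hw
            rcases List.mem_cons.1 hw with rfl | hw
            · exact hcbig
            · exact hb3 w hw
      | cons w s₁ =>
        simp only [List.cons_append, List.cons.injEq] at ht
        obtain ⟨rfl, rfl⟩ := ht
        have hwsmall : w ≤ m := hs w (List.mem_cons_self (a := w) (l := s₁))
        have hwc : w = c := by
          rcases hR with ⟨_, h2⟩ | ⟨h1, _⟩
          · exact h2
          · omega
        obtain ⟨b', hb1, hb2, hb3⟩ := ih s₁ b htsub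
          (fun z hz => hs z (List.mem_cons_of_mem w hz)) hb
        refine ⟨b', ?_, hb2, hb3⟩
        rw [List.cons_append, hwc]
        exact List.cons_sublist_cons.2 hb1

lemma sorted_split (m : ℕ) : ∀ u : List ℕ, u.Pairwise (· < ·) →
    u = (u.filter fun x => decide (x ≤ m)) ++ (u.filter fun x => decide (m < x)) := by
  intro u
  induction u with
  | nil => intro _; rfl
  | cons a t ih =>
    intro h
    rw [List.pairwise_cons] at h
    obtain ⟨ha, ht⟩ := h
    by_cases hc : a ≤ m
    · rw [List.filter_cons_of_pos (by simpa using hc),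
        List.filter_cons_of_neg (by simp; omega), List.cons_append]
      exact congrArg (a :: ·) (ih ht)
    · push_neg at hc
      have h1 : (t.filter fun x => decide (x ≤ m)) = [] := by
        rw [List.filter_eq_nil_iff]
        intro y hy
        have := ha y hy
        simp only [decide_eq_true_eq]
        omega
      have h2 : ((a :: t).filter fun x => decide (x ≤ m)) = [] := by
        rw [List.filter_cons_of_neg (by simpa using not_le.2 hc)]
        exact h1
      have h3 : ((a :: t).filter fun x => decide (m < x)) = a :: t := by
        rw [List.filter_eq_self]
        intro y hy
        simp only [decide_eq_true_eq]
        rcases List.mem_cons.1 hy with rfl | hy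
        · exact hc
        · exact lt_trans hc (ha y hy)
      rw [h2, h3, List.nil_append]

lemma map_getD_range (l : List ℕ) : (List.range l.length).map (fun i => l.getD i 0) = l := by
  apply List.ext_getElem
  · simp
  · intro i h1 h2
    simp [List.getD_eq_getElem l 0 h2, List.getElem?_eq_getElem h2]

lemma filter_getD_range (l : List ℕ) (p : ℕ → Bool) :
    ((List.range l.length).filter fun i => p (l.getD i 0)).length = (l.filter p).length := by
  conv_rhs => rw [← map_getD_range l]
  rw [List.filter_map]
  simp only [List.length_map]
  rfl

lemma filter_range'_small {n r : ℕ} (hr : r ≤ n) :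
    ((List.range' 1 n).filter fun x => decide (x ≤ n - r)).length = n - r := by
  have hsplit : List.range' 1 (n - r) ++ List.range' (1 + (n - r)) r = List.range' 1 n := by
    have := List.range'_append_1 (s := 1) (m := n - r) (n := r)
    rw [this]
    congr 1
    omega
  rw [← hsplit, List.filter_append]
  have h1 : ((List.range' 1 (n - r)).filter fun x => decide (x ≤ n - r)) = List.range' 1 (n - r) := by
    rw [List.filter_eq_self]
    intro a ha
    rw [List.mem_range'_1] at ha
    simp only [decide_eq_true_eq]
    omega
  have h2 : ((List.range' (1 + (n - r)) r).filter fun x => decide (x ≤ n - r)) = [] := by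
    rw [List.filter_eq_nil_iff]
    intro a ha
    rw [List.mem_range'_1] at ha
    simp only [decide_eq_true_eq]
    omega
  rw [h1, h2]
  simp

/-- rearranging the top `r` values among their positions preserves
avoidance of the increasing pattern `1 2 ⋯ k`, provided the `r`-upfix of `τ` is increasing.
Here `τ'` is such a rearrangement of `τ`: it is a permutation of `{1,…,n}` agreeing with
`τ` at every position holding a letter `≤ n - r`. -/
theorem statement8 (k n r : ℕ) (hk : 1 ≤ k) (hr : r ≤ n)
    (τ : List ℕ) (hτ : IsPermWord n τ)
    (hav : AvoidsSet {List.range' 1 k} τ)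
    (hup : (upfix n r τ).Pairwise (· < ·))
    (τ' : List ℕ) (hτ' : IsPermWord n τ')
    (hsmall : ∀ p : ℕ, τ.getD p 0 ≤ n - r → τ'.getD p 0 = τ.getD p 0) :
    AvoidsSet {List.range' 1 k} τ' := by
  intro u hsub hne hmem
  simp only [Set.mem_singleton_iff] at hmem
  obtain ⟨husort, hulen⟩ := sorted_of_stdize hmem
  have hlenτ : τ.length = n := by simpa using hτ.length_eq
  have hlenτ' : τ'.length = n := by simpa using hτ'.length_eq
  set m := n - r with hm
  have hTsub : ((List.range n).filter fun q => decide (τ.getD q 0 ≤ m)).Sublist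
      ((List.range n).filter fun q => decide (τ'.getD q 0 ≤ m)) := by
    apply List.monotone_filter_right
    intro q hq
    simp only [decide_eq_true_eq] at hq ⊢
    rw [hsmall q hq]; exact hq
  have hTlen : ((List.range n).filter fun q => decide (τ.getD q 0 ≤ m)).length = n - r := by
    have h1 := filter_getD_range τ (fun x => decide (x ≤ m))
    rw [hlenτ] at h1
    rw [h1]
    have h2 : (τ.filter fun x => decide (x ≤ m)).length
        = ((List.range' 1 n).filter fun x => decide (x ≤ m)).length :=
      (hτ.filter _).length_eq
    rw [h2, hm]
    exact filter_range'_small hr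
  have hTlen' : ((List.range n).filter fun q => decide (τ'.getD q 0 ≤ m)).length = n - r := by
    have h1 := filter_getD_range τ' (fun x => decide (x ≤ m))
    rw [hlenτ'] at h1
    rw [h1]
    have h2 : (τ'.filter fun x => decide (x ≤ m)).length
        = ((List.range' 1 n).filter fun x => decide (x ≤ m)).length :=
      (hτ'.filter _).length_eq
    rw [h2, hm]
    exact filter_range'_small hr
  have hTeq : ((List.range n).filter fun q => decide (τ.getD q 0 ≤ m))
      = ((List.range n).filter fun q => decide (τ'.getD q 0 ≤ m)) :=
    hTsub.eq_of_length (by rw [hTlen, hTlen'])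
  have hsmall' : ∀ q, τ'.getD q 0 ≤ m → τ.getD q 0 ≤ m := by
    intro q hq
    by_cases hqn : q < n
    · have hq' : q ∈ (List.range n).filter fun q => decide (τ'.getD q 0 ≤ m) := by
        simp only [List.mem_filter, List.mem_range, decide_eq_true_eq]
        exact ⟨hqn, hq⟩
      rw [← hTeq] at hq'
      simpa using (List.mem_filter.1 hq').2
    · have h0 : τ.getD q 0 = 0 := List.getD_eq_default _ _ (by omega)
      omega
  have hF : List.Forall₂ (fun a c => (a ≤ m ∧ a = c) ∨ (m < a ∧ m < c)) τ' τ := by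
    rw [List.forall₂_iff_get]
    refine ⟨by rw [hlenτ, hlenτ'], ?_⟩
    intro i h1 h2
    have hgd : τ.getD i 0 = τ.get ⟨i, h2⟩ := by
      simp [List.getD_eq_getElem τ 0 h2, List.getElem?_eq_getElem h2]
    have hgd' : τ'.getD i 0 = τ'.get ⟨i, h1⟩ := by
      simp [List.getD_eq_getElem τ' 0 h1, List.getElem?_eq_getElem h1]
    by_cases hc : τ.getD i 0 ≤ m
    · left
      have he := hsmall i hc
      constructor
      · rw [← hgd', he]; exact hc
      · rw [← hgd', ← hgd]; exact he
    · right
      push_neg at hc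
      constructor
      · rw [← hgd']
        by_contra hcon
        push_neg at hcon
        exact absurd (hsmall' i hcon) (by omega)
      · rw [← hgd]; exact hc
  set s := u.filter (fun x => decide (x ≤ m)) with hsdef
  set b := u.filter (fun x => decide (m < x)) with hbdef
  have husplit : u = s ++ b := sorted_split m u husort
  have hssmall : ∀ z ∈ s, z ≤ m := by
    intro z hz
    have := List.mem_filter.1 hz
    simpa using this.2
  have hbbig : ∀ z ∈ b, m < z := by
    intro z hz
    have := List.mem_filter.1 hz
    simpa using this.2
  obtain ⟨b', hsub', hlenb', hbig'⟩ := keyB hF s b (by rw [← husplit]; exact hsub) hssmall hbbig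
  have hb'eq : b'.filter (fun x => decide (n - r + 1 ≤ x)) = b' := by
    rw [List.filter_eq_self]
    intro z hz
    have := hbig' z hz
    simp only [decide_eq_true_eq]
    omega
  have hb'sub : b'.Sublist τ := (List.sublist_append_right s b').trans hsub'
  have hb'up : b'.Sublist (upfix n r τ) := by
    rw [upfix, ← hb'eq]
    exact hb'sub.filter _
  have hb'sorted : b'.Pairwise (· < ·) := List.Pairwise.sublist hb'up hup
  have hssorted : s.Pairwise (· < ·) := husort.filter _
  have hsort2 : (s ++ b').Pairwise (· < ·) := by
    rw [List.pairwise_append]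
    exact ⟨hssorted, hb'sorted, fun x hx y hy => lt_of_le_of_lt (hssmall x hx) (hbig' y hy)⟩
  have hlen2 : (s ++ b').length = k := by
    have hl := congrArg List.length husplit
    simp only [List.length_append] at hl ⊢
    omega
  have hne2 : s ++ b' ≠ [] := by
    intro h0
    rw [h0] at hlen2
    simp at hlen2
    omega
  exact hav (s ++ b') hsub' hne2
    (by rw [Set.mem_singleton_iff, stdize_of_sorted _ hsort2, hlen2])
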